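/- arXiv:1612.04511 — 2 statements merged into one kernel-verified Lean document; each statement's English description precedes it below -/
import Mathlib

section
/- For every n ∈ ℕ and m ∈ ℕ, the sum over all tuples (k_0,…,k_n) of nonnegative integers of (1 + 2^{-m}(k_0 + ⋯ + k_n))^{-(n+2)} is at most (π²/6)·2^{m(n+1)}. -/
open ENNReal Finset

-- fiber injection
noncomputable def fiberMap (n s : ℕ) (q : {q : Fin (n+1) → ℕ // ∑ i, q i = s}) :
    Fin n → Fin (s+1) := fun i => ⟨q.1 i.succ, by
      have h : q.1 i.succ ≤ ∑ j, q.1 j :=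
        Finset.single_le_sum (f := fun j => q.1 j) (fun _ _ => Nat.zero_le _)
          (Finset.mem_univ _)
      rw [q.2] at h
      omega⟩

theorem fiberMap_inj (n s : ℕ) : Function.Injective (fiberMap n s) := by
  rintro ⟨q, hq⟩ ⟨q', hq'⟩ h
  have htail : ∀ i : Fin n, q i.succ = q' i.succ := fun i =>
    congrArg Fin.val (congrFun h i)
  have hs : q 0 + ∑ i : Fin n, q i.succ = q' 0 + ∑ i : Fin n, q' i.succ := by
    rw [← Fin.sum_univ_succ q, ← Fin.sum_univ_succ q', hq, hq']
  have hsum : ∑ i : Fin n, q i.succ = ∑ i : Fin n, q' i.succ :=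
    Finset.sum_congr rfl fun i _ => htail i
  have h0 : q 0 = q' 0 := by omega
  ext j
  simp only []
  rcases Fin.eq_zero_or_eq_succ j with rfl | ⟨i, rfl⟩
  · exact h0
  · exact htail i

theorem basel_ennreal :
    ∑' s : ℕ, (((1 : ℝ≥0∞) + s) ^ 2)⁻¹ = ENNReal.ofReal (Real.pi ^ 2 / 6) := by
  have hb : HasSum (fun s : ℕ => (1 : ℝ) / ((s : ℝ) + 1) ^ 2) (Real.pi ^ 2 / 6) := by
    have h := (hasSum_nat_add_iff (f := fun n : ℕ => (1 : ℝ) / (n : ℝ) ^ 2) 1).mpr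
      (by simpa using hasSum_zeta_two)
    convert h using 2 with s
    push_cast
    · rfl
    · push_cast; ring
  rw [← hb.tsum_eq, ENNReal.ofReal_tsum_of_nonneg (fun _ => by positivity) hb.summable]
  refine tsum_congr fun s => ?_
  have h1 : (0:ℝ) < ((s:ℝ)+1)^2 := by positivity
  rw [one_div, ENNReal.ofReal_inv_of_pos h1, ENNReal.ofReal_pow (by positivity)]
  congr 2
  rw [ENNReal.ofReal_add (by positivity) zero_le_one, ENNReal.ofReal_natCast,
    ENNReal.ofReal_one, add_comm]

theorem groupedBound (n : ℕ) :
    ∑' q : Fin (n + 1) → ℕ, (((1 : ℝ≥0∞) + (∑ i, q i : ℕ)) ^ (n + 2))⁻¹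
      ≤ ENNReal.ofReal (Real.pi ^ 2 / 6) := by
  classical
  set h : ℕ → ℝ≥0∞ := fun s => (((1 : ℝ≥0∞) + s) ^ (n + 2))⁻¹ with hh
  set F : (Fin (n + 1) → ℕ) → ℕ := fun q => ∑ i, q i with hF
  have e1 : ∑' q : Fin (n + 1) → ℕ, h (F q)
      = ∑' s : ℕ, ∑' x : {q // F q = s}, h s := by
    rw [← (Equiv.sigmaFiberEquiv F).tsum_eq (fun q => h (F q)), ENNReal.tsum_sigma']
    refine tsum_congr fun s => tsum_congr fun x => ?_
    simp [x.2]
  rw [e1]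
  have key : ∀ s : ℕ, ∑' x : {q // F q = s}, h s ≤ (((1 : ℝ≥0∞) + s) ^ 2)⁻¹ := by
    intro s
    haveI : Fintype {q // F q = s} := Fintype.ofInjective _ (fiberMap_inj n s)
    rw [tsum_fintype, Finset.sum_const, Finset.card_univ, nsmul_eq_mul]
    have hcard : (Fintype.card {q // F q = s} : ℝ≥0∞) ≤ ((1 : ℝ≥0∞) + s) ^ n := by
      have := Fintype.card_le_of_injective _ (fiberMap_inj n s)
      calc (Fintype.card {q // F q = s} : ℝ≥0∞)
          ≤ ((Fintype.card (Fin n → Fin (s + 1)) : ℕ) : ℝ≥0∞) := by exact_mod_cast this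
        _ = ((1 : ℝ≥0∞) + s) ^ n := by
            simp [Fintype.card_fun]
            rw [show ((s:ℝ≥0∞) + 1) = (1 + s) by ring]
    calc (Fintype.card {q // F q = s} : ℝ≥0∞) * h s
        ≤ ((1 : ℝ≥0∞) + s) ^ n * h s := mul_le_mul_left hcard _
      _ = (((1 : ℝ≥0∞) + s) ^ 2)⁻¹ := by
          have hb0 : ((1 : ℝ≥0∞) + s) ≠ 0 := by simp
          have ha0 : ((1 : ℝ≥0∞) + s) ^ n ≠ 0 := pow_ne_zero _ hb0
          have hat : ((1 : ℝ≥0∞) + s) ^ n ≠ ⊤ := by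
            exact ENNReal.pow_ne_top (by simp [ENNReal.add_ne_top])
          rw [hh]
          simp only []
          rw [pow_add, ENNReal.mul_inv (Or.inl ha0) (Or.inr (pow_ne_zero _ hb0)),
            ← mul_assoc, ENNReal.mul_inv_cancel ha0 hat, one_mul]
  calc ∑' s : ℕ, ∑' _ : {q // F q = s}, h s
      ≤ ∑' s : ℕ, (((1 : ℝ≥0∞) + s) ^ 2)⁻¹ := ENNReal.tsum_le_tsum key
    _ = ENNReal.ofReal (Real.pi ^ 2 / 6) := basel_ennreal

theorem reindex (n m : ℕ) (h : ℕ → ℝ≥0∞) :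
    ∑' k : Fin (n + 1) → ℕ, h (∑ i, k i / 2 ^ m)
      = (2 : ℝ≥0∞) ^ (m * (n + 1)) * ∑' q : Fin (n + 1) → ℕ, h (∑ i, q i) := by
  haveI : NeZero (2 ^ m) := ⟨by positivity⟩
  set e : (Fin (n + 1) → ℕ) ≃ (Fin (n + 1) → ℕ) × (Fin (n + 1) → Fin (2 ^ m)) :=
    (Equiv.arrowCongr (Equiv.refl _) (Nat.divModEquiv (2 ^ m))).trans
      (Equiv.arrowProdEquivProdArrow _ _ _) with he
  have h1 : ∀ k : Fin (n + 1) → ℕ, (e k).1 = fun i => k i / 2 ^ m := fun k => rfl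
  calc ∑' k : Fin (n + 1) → ℕ, h (∑ i, k i / 2 ^ m)
      = ∑' k : Fin (n + 1) → ℕ, h (∑ i, (e k).1 i) := by
        refine tsum_congr fun k => ?_
        rw [h1 k]
    _ = ∑' p : (Fin (n + 1) → ℕ) × (Fin (n + 1) → Fin (2 ^ m)), h (∑ i, p.1 i) :=
        e.tsum_eq (fun p => h (∑ i, p.1 i))
    _ = ∑' q : Fin (n + 1) → ℕ, ∑' _ : Fin (n + 1) → Fin (2 ^ m), h (∑ i, q i) :=
        ENNReal.tsum_prod (f := fun (a : Fin (n+1) → ℕ) (_ : Fin (n+1) → Fin (2^m)) => h (∑ i, a i))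
    _ = ∑' q : Fin (n + 1) → ℕ, ((2 : ℝ≥0∞) ^ (m * (n + 1)) * h (∑ i, q i)) := by
        refine tsum_congr fun q => ?_
        rw [tsum_fintype, Finset.sum_const, Finset.card_univ, nsmul_eq_mul]
        congr 1
        rw [Fintype.card_fun, Fintype.card_fin, Nat.cast_pow, Nat.cast_pow, ← pow_mul,
          Nat.cast_ofNat, Fintype.card_fin]
    _ = (2 : ℝ≥0∞) ^ (m * (n + 1)) * ∑' q : Fin (n + 1) → ℕ, h (∑ i, q i) :=
        ENNReal.tsum_mul_left

theorem pointwise_bound (n m : ℕ) (k : Fin (n + 1) → ℕ) :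
    ENNReal.ofReal (((1 : ℝ) + (2 : ℝ) ^ (-(m : ℤ)) * ∑ i, (k i : ℝ)) ^ (-((n : ℤ) + 2)))
      ≤ (((1 : ℝ≥0∞) + (∑ i, k i / 2 ^ m : ℕ)) ^ (n + 2))⁻¹ := by
  set S : ℝ := ∑ i, (k i : ℝ) with hS
  have hS0 : 0 ≤ S := Finset.sum_nonneg fun _ _ => Nat.cast_nonneg _
  set s : ℕ := ∑ i, k i / 2 ^ m with hs
  set a : ℝ := 1 + (2 : ℝ) ^ (-(m : ℤ)) * S with ha
  set b : ℝ := 1 + (s : ℝ) with hb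
  have hb1 : (1 : ℝ) ≤ b := by simp [hb]
  have hba : b ≤ a := by
    have h2 : (2 : ℝ) ^ (-(m : ℤ)) = ((2 : ℝ) ^ m)⁻¹ := by
      rw [zpow_neg, zpow_natCast]
    have hdiv : (s : ℝ) ≤ ((2 : ℝ) ^ m)⁻¹ * S := by
      rw [hs, Nat.cast_sum, hS, Finset.mul_sum]
      refine Finset.sum_le_sum fun i _ => ?_
      have := Nat.cast_div_le (m := k i) (n := 2 ^ m) (α := ℝ)
      rw [div_eq_inv_mul] at this
      simpa using this
    rw [ha, hb, h2]
    linarith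
  have hzpow : a ^ (-((n : ℤ) + 2)) = (a ^ (n + 2))⁻¹ := by
    have : -((n : ℤ) + 2) = -((n + 2 : ℕ) : ℤ) := by push_cast; ring
    rw [this, zpow_neg, zpow_natCast]
  rw [hzpow]
  have hineq : (a ^ (n + 2))⁻¹ ≤ (b ^ (n + 2))⁻¹ := by
    have hbp : (0 : ℝ) < b ^ (n + 2) := by positivity
    exact inv_anti₀ hbp (pow_le_pow_left₀ (by linarith) hba _)
  calc ENNReal.ofReal ((a ^ (n + 2))⁻¹)
      ≤ ENNReal.ofReal ((b ^ (n + 2))⁻¹) := ENNReal.ofReal_le_ofReal hineq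
    _ = (((1 : ℝ≥0∞) + s) ^ (n + 2))⁻¹ := by
        rw [ENNReal.ofReal_inv_of_pos (by positivity), ENNReal.ofReal_pow (by linarith)]
        congr 2
        rw [hb, ENNReal.ofReal_add zero_le_one (by positivity), ENNReal.ofReal_natCast,
          ENNReal.ofReal_one]

/-- For every `n m : ℕ`, the sum over all `(n+1)`-tuples `k` of nonnegative integers of
`(1 + 2^{-m} (k₀ + ⋯ + kₙ))^{-(n+2)}` is at most `(π²/6) · 2^{m(n+1)}`. -/
theorem dyadic_lattice_sum_bound (n m : ℕ) :
    ∑' k : Fin (n + 1) → ℕ,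
        ((1 : ℝ) + (2 : ℝ) ^ (-(m : ℤ)) * ∑ i, (k i : ℝ)) ^ (-((n : ℤ) + 2))
      ≤ Real.pi ^ 2 / 6 * 2 ^ (m * (n + 1)) := by
  set f : (Fin (n + 1) → ℕ) → ℝ := fun k =>
    ((1 : ℝ) + (2 : ℝ) ^ (-(m : ℤ)) * ∑ i, (k i : ℝ)) ^ (-((n : ℤ) + 2)) with hf
  have hpos : (0 : ℝ) ≤ Real.pi ^ 2 / 6 * 2 ^ (m * (n + 1)) := by positivity
  by_cases hsum : Summable f
  · have h0 : ∀ k, 0 ≤ f k := fun k => by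
      have : (0 : ℝ) < 1 + (2 : ℝ) ^ (-(m : ℤ)) * ∑ i, (k i : ℝ) := by positivity
      exact le_of_lt (zpow_pos this _)
    have key : ENNReal.ofReal (∑' k, f k)
        ≤ ENNReal.ofReal (Real.pi ^ 2 / 6 * 2 ^ (m * (n + 1))) := by
      rw [ENNReal.ofReal_tsum_of_nonneg h0 hsum]
      calc ∑' k, ENNReal.ofReal (f k)
          ≤ ∑' k : Fin (n + 1) → ℕ,
              (fun t : ℕ => (((1 : ℝ≥0∞) + t) ^ (n + 2))⁻¹) (∑ i, k i / 2 ^ m) :=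
            ENNReal.tsum_le_tsum fun k => pointwise_bound n m k
        _ = (2 : ℝ≥0∞) ^ (m * (n + 1)) * ∑' q : Fin (n + 1) → ℕ,
              (fun t : ℕ => (((1 : ℝ≥0∞) + t) ^ (n + 2))⁻¹) (∑ i, q i) :=
            reindex n m (fun t : ℕ => (((1 : ℝ≥0∞) + t) ^ (n + 2))⁻¹)
        _ ≤ (2 : ℝ≥0∞) ^ (m * (n + 1)) * ENNReal.ofReal (Real.pi ^ 2 / 6) :=
            mul_le_mul_right (groupedBound n) _
        _ = ENNReal.ofReal (Real.pi ^ 2 / 6 * 2 ^ (m * (n + 1))) := by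
            rw [ENNReal.ofReal_mul (by positivity), ENNReal.ofReal_pow (by norm_num),
              ENNReal.ofReal_ofNat, mul_comm]
    exact (ENNReal.ofReal_le_ofReal_iff hpos).1 key
  · rw [tsum_eq_zero_of_not_summable hsum]
    exact hpos
end

section
/- Let f ∈ C^n and define φ(λ_0, λ_1, …, λ_{n−1}) = f^{[n]}(λ_0, λ_0, λ_1, …, λ_{n−1}). Then φ(λ_0,…,λ_{n−1}) = ∫_{S^{n−1}} s_0 · f^{(n)}(∑_{j=0}^{n−1} λ_j s_j) dσ_{n−1}(s). -/
open MeasureTheory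

noncomputable section

/-- Recursive divided difference of `f`: `f^{[0]} = f` and
`f^{[n]}(λ₀,λ₁,λ̃) = (f^{[n-1]}(λ₀,λ̃) − f^{[n-1]}(λ₁,λ̃))/(λ₀ − λ₁)` for `λ₀ ≠ λ₁`,
extended by the derivative in the first variable when `λ₀ = λ₁`. -/
noncomputable def divDiff (f : ℝ → ℂ) : ℕ → (ℕ → ℝ) → ℂ
  | 0, l => f (l 0)
  | (n + 1), l =>
      if l 0 = l 1 then
        deriv (fun x : ℝ => divDiff f n (fun j => if j = 0 then x else l (j + 1))) (l 1)
      else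
        (divDiff f n (fun j => if j = 0 then l 0 else l (j + 1))
          - divDiff f n (fun j => l (j + 1))) / (((l 0 - l 1 : ℝ)) : ℂ)

namespace DivDiffHG

/-- The standard simplex realized in `ℝ^n`. -/
def S (n : ℕ) : Set (Fin n → ℝ) := {s | (∀ j, 0 ≤ s j) ∧ ∑ j, s j ≤ 1}

lemma contSum (n : ℕ) : Continuous fun s : Fin n → ℝ => ∑ i, s i :=
  continuous_finset_sum _ fun i _ => continuous_apply i

lemma isClosed_S (n : ℕ) : IsClosed (S n) := by
  have h1 : IsClosed {s : Fin n → ℝ | ∀ j, 0 ≤ s j} := by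
    have : {s : Fin n → ℝ | ∀ j, 0 ≤ s j} = ⋂ j, {s | 0 ≤ s j} := by
      ext s; simp [Set.mem_iInter]
    rw [this]
    exact isClosed_iInter fun j => isClosed_le continuous_const (continuous_apply j)
  have h2 : IsClosed {s : Fin n → ℝ | ∑ j, s j ≤ 1} :=
    isClosed_le (contSum n) continuous_const
  exact h1.inter h2

lemma measurableSet_S (n : ℕ) : MeasurableSet (S n) := (isClosed_S n).measurableSet

lemma isCompact_S (n : ℕ) : IsCompact (S n) := by
  refine (isCompact_Icc (a := (0 : Fin n → ℝ)) (b := 1)).of_isClosed_subset (isClosed_S n) ?_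
  rintro s ⟨h1, h2⟩
  refine Set.mem_Icc.2 ⟨fun j => h1 j, fun j => ?_⟩
  calc s j ≤ ∑ i, s i := Finset.single_le_sum (fun i _ => h1 i) (Finset.mem_univ j)
    _ ≤ 1 := h2

lemma volume_S_lt_top (n : ℕ) : volume (S n) < ⊤ := (isCompact_S n).measure_lt_top

/-- The (unweighted) Hermite–Genocchi integral, with the *first* node carrying the
dependent barycentric coordinate `1 - ∑ s`. -/
def K (f : ℝ → ℂ) (n : ℕ) (l : ℕ → ℝ) : ℂ :=
  ∫ s in S n, iteratedDeriv n f (l 0 * (1 - ∑ i, s i) + ∑ j : Fin n, l ((j : ℕ) + 1) * s j)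

section Param

variable {n : ℕ} {g g' : ℝ → ℂ} {a c : (Fin n → ℝ) → ℝ}

lemma param_arg_mem (ha : Continuous a) (hc : Continuous c) (x₀ : ℝ) :
    ∃ R ≥ 0, ∀ x ∈ Metric.ball x₀ 1, ∀ s ∈ S n, x * a s + c s ∈ Set.Icc (-R) R := by
  obtain ⟨A, hA⟩ := (isCompact_S n).exists_bound_of_continuousOn ha.continuousOn
  obtain ⟨C, hC⟩ := (isCompact_S n).exists_bound_of_continuousOn hc.continuousOn
  have hA0 : 0 ≤ A := by
    rcases n.eq_zero_or_pos with h | h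
    · -- S n nonempty anyway; easier: use le_trans with norm nonneg if S nonempty
      exact le_trans (norm_nonneg _) (hA 0 (by constructor <;> simp))
    · exact le_trans (norm_nonneg _) (hA 0 (by constructor <;> simp))
  have hC0 : 0 ≤ C := le_trans (norm_nonneg _) (hC 0 (by constructor <;> simp))
  refine ⟨(|x₀| + 1) * A + C, by positivity, fun x hx s hs => ?_⟩
  have h1 : |x| ≤ |x₀| + 1 := by
    have h := abs_sub_abs_le_abs_sub x x₀
    have hd : |x - x₀| < 1 := by
      simpa [Real.dist_eq] using hx
    linarith
  have h2 := hA s hs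
  have h3 := hC s hs
  rw [Real.norm_eq_abs] at h2 h3
  have habs : |x * a s + c s| ≤ (|x₀| + 1) * A + C := by
    calc |x * a s + c s| ≤ |x * a s| + |c s| := abs_add_le _ _
      _ = |x| * |a s| + |c s| := by rw [abs_mul]
      _ ≤ (|x₀| + 1) * A + C := by
          have := mul_le_mul h1 h2 (abs_nonneg _) (by positivity)
          linarith
  exact Set.mem_Icc.2 (abs_le.1 habs)

lemma cont_param (hg : Continuous g) (ha : Continuous a) (hc : Continuous c) :
    Continuous fun x : ℝ => ∫ s in S n, g (x * a s + c s) := by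
  rw [continuous_iff_continuousAt]
  intro x₀
  obtain ⟨R, -, hR⟩ := param_arg_mem ha hc x₀
  obtain ⟨M, hM⟩ := (isCompact_Icc (a := -R) (b := R)).exists_bound_of_continuousOn hg.continuousOn
  refine continuousAt_of_dominated (bound := fun _ => M) ?_ ?_ ?_ ?_
  · exact .of_forall fun x =>
      ((hg.comp ((continuous_const.mul ha).add hc)).aestronglyMeasurable)
  · filter_upwards [Metric.ball_mem_nhds x₀ one_pos] with x hx
    refine (ae_restrict_iff' (measurableSet_S n)).2 (.of_forall fun s hs => ?_)
    exact hM _ (hR x hx s hs)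
  · exact integrableOn_const (volume_S_lt_top n).ne
  · exact .of_forall fun s =>
      (hg.comp ((continuous_id.mul continuous_const).add continuous_const)).continuousAt

lemma hasDerivAt_param (hg' : Continuous g') (hgg' : ∀ y, HasDerivAt g (g' y) y)
    (ha : Continuous a) (hc : Continuous c) (x₀ : ℝ) :
    HasDerivAt (fun x : ℝ => ∫ s in S n, g (x * a s + c s))
      (∫ s in S n, a s • g' (x₀ * a s + c s)) x₀ := by
  have hg : Continuous g := continuous_iff_continuousAt.2 fun y => (hgg' y).continuousAt
  obtain ⟨A, hA⟩ := (isCompact_S n).exists_bound_of_continuousOn ha.continuousOn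
  obtain ⟨R, -, hR⟩ := param_arg_mem ha hc x₀
  obtain ⟨M, hM⟩ :=
    (isCompact_Icc (a := -R) (b := R)).exists_bound_of_continuousOn hg'.continuousOn
  refine (hasDerivAt_integral_of_dominated_loc_of_deriv_le (s := Metric.ball x₀ 1) (Metric.ball_mem_nhds x₀ one_pos)
      (F := fun x s => g (x * a s + c s)) (F' := fun x s => a s • g' (x * a s + c s))
      (bound := fun _ => A * M) ?_ ?_ ?_ ?_ ?_ ?_).2
  · exact .of_forall fun x =>
      ((hg.comp ((continuous_const.mul ha).add hc)).aestronglyMeasurable)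
  · exact ((hg.comp ((continuous_const.mul ha).add hc)).continuousOn.integrableOn_compact
      (isCompact_S n))
  · exact ((ha.smul (hg'.comp ((continuous_const.mul ha).add hc))).aestronglyMeasurable)
  · refine (ae_restrict_iff' (measurableSet_S n)).2 (.of_forall fun s hs => fun x hx => ?_)
    rw [norm_smul]
    have h1 := hA s hs
    have h2 := hM _ (hR x hx s hs)
    exact mul_le_mul h1 h2 (norm_nonneg _) (le_trans (norm_nonneg _) h1)
  · exact integrableOn_const (volume_S_lt_top n).ne
  · refine .of_forall fun s => fun x _ => ?_
    have h1 : HasDerivAt (fun x : ℝ => x * a s + c s) (a s) x := by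
      simpa using ((hasDerivAt_id x).mul_const (a s)).add_const (c s)
    exact (hgg' (x * a s + c s)).scomp x h1

end Param


section Recursion

variable {f : ℝ → ℂ}

lemma contDiff_nat_le {n m : ℕ} (hf : ContDiff ℝ (n : ℕ) f) (h : m ≤ n) :
    ContDiff ℝ (m : ℕ) f := hf.of_le (by exact_mod_cast h)

/-- The key recursion for the Hermite–Genocchi integral, splitting off the first two nodes. -/
lemma K_succ {n : ℕ} (hf : ContDiff ℝ ((n : ℕ) + 1) f) {l : ℕ → ℝ} (h01 : l 0 ≠ l 1) :
    K f (n + 1) l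
      = (K f n (fun j => if j = 0 then l 0 else l (j + 1))
          - K f n (fun j => if j = 0 then l 1 else l (j + 1))) / ((l 0 - l 1 : ℝ) : ℂ) := by
  classical
  set g : ℝ → ℂ := iteratedDeriv (n + 1) f with hgdef
  set p : ℝ → ℂ := iteratedDeriv n f with hpdef
  have hgc : Continuous g := hf.continuous_iteratedDeriv (n + 1) (by exact_mod_cast le_rfl)
  have hpc : Continuous p := hf.continuous_iteratedDeriv n (by exact_mod_cast Nat.le_succ n)
  have hpd : ∀ y, HasDerivAt p (g y) y := by
    intro y
    have hdiff : Differentiable ℝ p :=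
      hf.differentiable_iteratedDeriv n (by exact_mod_cast Nat.lt_succ_self n)
    have h1 := (hdiff y).hasDerivAt
    rwa [show deriv p y = g y from by rw [hgdef, iteratedDeriv_succ]] at h1
  set c : ℝ := l 1 - l 0 with hcdef
  have hc : c ≠ 0 := sub_ne_zero.2 (Ne.symm h01)
  set A : (Fin n → ℝ) → ℝ :=
    fun t => l 0 * (1 - ∑ i, t i) + ∑ j : Fin n, l ((j : ℕ) + 1 + 1) * t j with hAdef
  set B : (Fin n → ℝ) → ℝ :=
    fun t => l 1 * (1 - ∑ i, t i) + ∑ j : Fin n, l ((j : ℕ) + 1 + 1) * t j with hBdef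
  have hAc : Continuous A := by
    exact (continuous_const.mul (continuous_const.sub (contSum n))).add
      (continuous_finset_sum _ fun j _ => continuous_const.mul (continuous_apply j))
  have hBc : Continuous B := by
    exact (continuous_const.mul (continuous_const.sub (contSum n))).add
      (continuous_finset_sum _ fun j _ => continuous_const.mul (continuous_apply j))
  set G : (Fin (n + 1) → ℝ) → ℂ :=
    fun s => g (l 0 * (1 - ∑ i, s i) + ∑ j : Fin (n + 1), l ((j : ℕ) + 1) * s j) with hGdef
  have hGcont : Continuous G := by
    exact hgc.comp ((continuous_const.mul (continuous_const.sub (contSum (n + 1)))).add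
      (continuous_finset_sum _ fun j _ => continuous_const.mul (continuous_apply j)))
  have hGint : IntegrableOn G (S (n + 1)) := hGcont.continuousOn.integrableOn_compact (isCompact_S _)
  have hGind : Integrable (Set.indicator (S (n + 1)) G) :=
    (integrable_indicator_iff (measurableSet_S _)).2 hGint
  set e : (Fin (n + 1) → ℝ) ≃ᵐ ℝ × (Fin n → ℝ) :=
    MeasurableEquiv.piFinSuccAbove (fun _ => ℝ) 0 with hedef
  have hemp : MeasurePreserving e volume volume := volume_preserving_piFinSuccAbove (fun _ => ℝ) 0
  have hesymm : ∀ q : ℝ × (Fin n → ℝ), e.symm q = Fin.cons q.1 q.2 := by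
    intro q
    show (Fin.insertNthEquiv (fun _ => ℝ) 0) q = _
    exact Fin.insertNth_zero' q.1 q.2
  have key1 : K f (n + 1) l = ∫ q : ℝ × (Fin n → ℝ), Set.indicator (S (n + 1)) G (Fin.cons q.1 q.2) := by
    rw [K, ← integral_indicator (measurableSet_S _),
      ← (hemp.symm e).integral_comp' (Set.indicator (S (n + 1)) G)]
    exact integral_congr_ae (.of_forall fun q => by simp only [hesymm q])
  have hprodInt :
      Integrable (fun q : ℝ × (Fin n → ℝ) => Set.indicator (S (n + 1)) G (Fin.cons q.1 q.2)) := by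
    have h1 := ((hemp.symm e).integrable_comp_emb e.symm.measurableEmbedding).2 hGind
    have h2 : (Set.indicator (S (n + 1)) G ∘ e.symm)
        = fun q : ℝ × (Fin n → ℝ) => Set.indicator (S (n + 1)) G (Fin.cons q.1 q.2) :=
      funext fun q => by simp [Function.comp, hesymm q]
    rwa [h2] at h1
  have key2 : K f (n + 1) l
      = ∫ t : Fin n → ℝ, ∫ u : ℝ, Set.indicator (S (n + 1)) G (Fin.cons u t) := by
    rw [key1]
    rw [show (volume : Measure (ℝ × (Fin n → ℝ))) = (volume : Measure ℝ).prod volume from rfl] at hprodInt ⊢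
    exact integral_prod_symm _ hprodInt
  have hsumcons : ∀ (u : ℝ) (t : Fin n → ℝ), ∑ i, Fin.cons u t i = u + ∑ i, t i := by
    intro u t
    rw [Fin.sum_univ_succ]
    simp
  have hGcons : ∀ (u : ℝ) (t : Fin n → ℝ), G (Fin.cons u t) = g (A t + c * u) := by
    intro u t
    rw [hGdef]
    simp only
    congr 1
    rw [hsumcons, Fin.sum_univ_succ]
    simp only [Fin.cons_zero, Fin.cons_succ, Fin.val_succ, Fin.val_zero]
    rw [hAdef, hcdef]
    ring
  have hmem : ∀ (u : ℝ) (t : Fin n → ℝ),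
      Fin.cons u t ∈ S (n + 1) ↔ ((∀ j, 0 ≤ t j) ∧ u ∈ Set.Icc 0 (1 - ∑ i, t i)) := by
    intro u t
    constructor
    · rintro ⟨h1, h2⟩
      have h10 : (0 : ℝ) ≤ u := by simpa using h1 0
      rw [hsumcons] at h2
      exact ⟨fun j => by simpa using h1 j.succ, ⟨h10, by linarith⟩⟩
    · rintro ⟨h1, hu0, hu1⟩
      refine ⟨fun j => ?_, ?_⟩
      · refine Fin.cases ?_ (fun i => ?_) j
        · simpa using hu0
        · simpa using h1 i
      · rw [hsumcons]; linarith
  have inner : ∀ t : Fin n → ℝ,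
      (∫ u : ℝ, Set.indicator (S (n + 1)) G (Fin.cons u t))
        = Set.indicator (S n) (fun t => (c⁻¹ : ℝ) • (p (B t) - p (A t))) t := by
    intro t
    by_cases ht : ∀ j, 0 ≤ t j
    · have hfe : (fun u => Set.indicator (S (n + 1)) G (Fin.cons u t))
          = Set.indicator (Set.Icc 0 (1 - ∑ i, t i)) (fun u => g (A t + c * u)) := by
        funext u
        by_cases hu : u ∈ Set.Icc 0 (1 - ∑ i, t i)
        · rw [Set.indicator_of_mem hu, Set.indicator_of_mem ((hmem u t).2 ⟨ht, hu⟩), hGcons]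
        · rw [Set.indicator_of_notMem hu,
            Set.indicator_of_notMem (fun hm => hu ((hmem u t).1 hm).2)]
      rw [hfe, integral_indicator measurableSet_Icc]
      by_cases hT : (0 : ℝ) ≤ 1 - ∑ i, t i
      · have hderiv : ∀ u ∈ Set.uIcc (0 : ℝ) (1 - ∑ i, t i),
            HasDerivAt (fun u => (c⁻¹ : ℝ) • p (A t + c * u)) (g (A t + c * u)) u := by
          intro u _
          have h1 : HasDerivAt (fun u : ℝ => A t + c * u) c u := by
            simpa using ((hasDerivAt_id u).const_mul c).const_add (A t)
          have h2 := (hpd (A t + c * u)).scomp u h1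
          have h3 := h2.const_smul (c⁻¹ : ℝ)
          rw [smul_smul, inv_mul_cancel₀ hc, one_smul] at h3
          exact h3
        have hii : IntervalIntegrable (fun u => g (A t + c * u)) volume 0 (1 - ∑ i, t i) :=
          (hgc.comp (continuous_const.add (continuous_const.mul continuous_id))).intervalIntegrable _ _
        have hFTC := intervalIntegral.integral_eq_sub_of_hasDerivAt hderiv hii
        rw [integral_Icc_eq_integral_Ioc, ← intervalIntegral.integral_of_le hT, hFTC,
          Set.indicator_of_mem (show t ∈ S n from ⟨ht, by linarith⟩)]
        have hBT : A t + c * (1 - ∑ i, t i) = B t := by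
          rw [hAdef, hBdef, hcdef]; ring
        rw [hBT, mul_zero, add_zero, smul_sub]
      · rw [Set.Icc_eq_empty (by intro hcon; exact hT (le_of_lt (by linarith [lt_of_not_ge hT]))),
          setIntegral_empty,
          Set.indicator_of_notMem (fun hS => hT (by linarith [hS.2]))]
    · have hfe : (fun u => Set.indicator (S (n + 1)) G (Fin.cons u t)) = fun _ => (0 : ℂ) := by
        funext u
        exact Set.indicator_of_notMem (fun hm => ht ((hmem u t).1 hm).1) _
      rw [hfe, integral_zero, Set.indicator_of_notMem (fun hS => ht hS.1)]
  have hpA : IntegrableOn (fun t => p (A t)) (S n) :=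
    (hpc.comp hAc).continuousOn.integrableOn_compact (isCompact_S n)
  have hpB : IntegrableOn (fun t => p (B t)) (S n) :=
    (hpc.comp hBc).continuousOn.integrableOn_compact (isCompact_S n)
  have key3 : K f (n + 1) l = (c⁻¹ : ℝ) • ((∫ t in S n, p (B t)) - ∫ t in S n, p (A t)) := by
    rw [key2]
    rw [show (fun t : Fin n → ℝ => ∫ u : ℝ, Set.indicator (S (n + 1)) G (Fin.cons u t))
        = Set.indicator (S n) (fun t => (c⁻¹ : ℝ) • (p (B t) - p (A t))) from funext inner]
    rw [integral_indicator (measurableSet_S n), integral_smul, integral_sub hpB hpA]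
  have hKA : (∫ t in S n, p (A t)) = K f n (fun j => if j = 0 then l 0 else l (j + 1)) := by
    rw [K]
    refine setIntegral_congr_fun (measurableSet_S n) (fun t _ => ?_)
    simp only [Nat.succ_ne_zero, if_false, if_pos rfl]
    norm_num
    rfl
  have hKB : (∫ t in S n, p (B t)) = K f n (fun j => if j = 0 then l 1 else l (j + 1)) := by
    rw [K]
    refine setIntegral_congr_fun (measurableSet_S n) (fun t _ => ?_)
    simp only [Nat.succ_ne_zero, if_false, if_pos rfl]
    norm_num
    rfl
  rw [key3, hKA, hKB]
  have hne : ((l 0 - l 1 : ℝ) : ℂ) ≠ 0 := by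
    exact_mod_cast sub_ne_zero.2 h01
  have hcc : ((c : ℝ) : ℂ) ≠ 0 := by exact_mod_cast hc
  rw [Complex.real_smul]
  have h2 : ((l 1 : ℝ) : ℂ) - ((l 0 : ℝ) : ℂ) ≠ 0 := by
    rw [← Complex.ofReal_sub]; exact_mod_cast sub_ne_zero.2 (Ne.symm h01)
  have h3 : ((l 0 : ℝ) : ℂ) - ((l 1 : ℝ) : ℂ) ≠ 0 := by
    rw [← Complex.ofReal_sub]; exact_mod_cast sub_ne_zero.2 h01
  push_cast [hcdef]
  rw [inv_mul_eq_div, div_eq_div_iff h2 h3]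
  ring


lemma K_first_node (n : ℕ) (f : ℝ → ℂ) (l : ℕ → ℝ) (x : ℝ) :
    K f n (fun j => if j = 0 then x else l j)
      = ∫ s in S n, iteratedDeriv n f
          (x * (1 - ∑ i, s i) + ∑ j : Fin n, l ((j : ℕ) + 1) * s j) := by
  rw [K]
  refine setIntegral_congr_fun (measurableSet_S n) (fun s _ => ?_)
  norm_num

lemma cont_K_first_node (n : ℕ) {f : ℝ → ℂ} (hf : ContDiff ℝ (n : ℕ) f) (l : ℕ → ℝ) :
    Continuous fun x => K f n (fun j => if j = 0 then x else l j) := by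
  simp only [K_first_node]
  exact cont_param (hf.continuous_iteratedDeriv n (by exact_mod_cast le_rfl))
    (continuous_const.sub (contSum n))
    (continuous_finset_sum _ fun j _ => continuous_const.mul (continuous_apply j))

/-- Hermite–Genocchi formula. -/
lemma divDiff_eq_K (f : ℝ → ℂ) (n : ℕ) (hf : ContDiff ℝ (n : ℕ) f) (l : ℕ → ℝ) :
    divDiff f n l = K f n l := by
  induction n generalizing l with
  | zero =>
    show f (l 0) = K f 0 l
    rw [K]
    have hS : S 0 = Set.univ := by
      ext s; simp [S]
    rw [hS, Measure.restrict_univ]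
    have hvol : (volume : Measure (Fin 0 → ℝ)) Set.univ = 1 := by
      rw [MeasureTheory.volume_pi, Measure.pi_univ]
      simp
    simp only [iteratedDeriv_zero, Finset.univ_eq_empty, Finset.sum_empty, sub_zero, mul_one,
      add_zero]
    rw [integral_const, measureReal_def, hvol]
    simp
  | succ n ih =>
    have hfn : ContDiff ℝ (n : ℕ) f := contDiff_nat_le (by exact_mod_cast hf) (Nat.le_succ n)
    by_cases h : l 0 = l 1
    · have hδ : divDiff f (n + 1) l
          = deriv (fun x => divDiff f n (fun j => if j = 0 then x else l (j + 1))) (l 1) := by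
        rw [divDiff, if_pos h]
      rw [hδ]
      have hfx : (fun x => divDiff f n (fun j => if j = 0 then x else l (j + 1)))
          = fun x => K f n (fun j => if j = 0 then x else l (j + 1)) :=
        funext fun x => ih hfn _
      rw [hfx]
      have hslope : HasDerivAt (fun x => K f n (fun j => if j = 0 then x else l (j + 1)))
          (K f (n + 1) l) (l 1) := by
        rw [hasDerivAt_iff_tendsto_slope]
        have hev : slope (fun x => K f n (fun j => if j = 0 then x else l (j + 1))) (l 1)
            =ᶠ[nhdsWithin (l 1) {l 1}ᶜ]
              fun x => K f (n + 1) (fun j => if j = 0 then x else l j) := by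
          filter_upwards [self_mem_nhdsWithin] with x hx
          have hxne : x ≠ l 1 := hx
          have hks := K_succ (f := f) (n := n) (l := fun j => if j = 0 then x else l j)
            (by exact_mod_cast hf) (by simpa using hxne)
          norm_num [Nat.succ_ne_zero] at hks
          simp only [slope_def_module]
          rw [hks, Complex.real_smul, div_eq_mul_inv]
          push_cast
          ring
        refine Filter.Tendsto.congr' hev.symm ?_
        have hcont := (cont_K_first_node (n + 1) (by exact_mod_cast hf) l).tendsto (l 1)
        have hval : (fun j => if j = 0 then l 1 else l j) = l := by
          funext j; by_cases hj : j = 0 <;> simp [hj, ← h]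
        rw [hval] at hcont
        exact hcont.mono_left nhdsWithin_le_nhds
      rw [hslope.deriv]
    · have hδ : divDiff f (n + 1) l
          = (divDiff f n (fun j => if j = 0 then l 0 else l (j + 1))
              - divDiff f n (fun j => l (j + 1))) / ((l 0 - l 1 : ℝ) : ℂ) := by
        rw [divDiff, if_neg h]
      rw [hδ, ih hfn, ih hfn, K_succ (by exact_mod_cast hf) h]
      have e4 : (fun j => l (j + 1)) = fun j => if j = 0 then l 1 else l (j + 1) := by
        funext j; by_cases hj : j = 0 <;> simp [hj]
      rw [e4]

end Recursion

section Rot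

/-- The cyclic barycentric rotation on the simplex. -/
def rot (m : ℕ) (t : Fin m → ℝ) : Fin m → ℝ :=
  fun j => if h : (j : ℕ) + 1 < m then t ⟨(j : ℕ) + 1, h⟩ else 1 - ∑ i, t i

lemma rot_last {k : ℕ} (t : Fin (k + 1) → ℝ) :
    rot (k + 1) t (Fin.last k) = 1 - ∑ i, t i := by
  have hlast : ¬((Fin.last k : ℕ) + 1 < k + 1) := by simp
  exact dif_neg hlast

lemma rot_castSucc {k : ℕ} (t : Fin (k + 1) → ℝ) (i : Fin k) :
    rot (k + 1) t i.castSucc = t i.succ := by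
  have h1 : ((i.castSucc : ℕ)) + 1 < k + 1 := by
    have := i.isLt
    simp only [Fin.coe_castSucc]
    omega
  rw [show rot (k + 1) t i.castSucc = t ⟨(i.castSucc : ℕ) + 1, h1⟩ from dif_pos h1]
  congr 1

lemma rot_sum {k : ℕ} (t : Fin (k + 1) → ℝ) : (∑ j, rot (k + 1) t j) = 1 - t 0 := by
  rw [Fin.sum_univ_castSucc]
  have hlast : ¬((Fin.last k : ℕ) + 1 < k + 1) := by simp
  rw [show rot (k + 1) t (Fin.last k) = 1 - ∑ i, t i from dif_neg hlast]
  have hcs : ∀ i : Fin k, rot (k + 1) t i.castSucc = t i.succ := by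
    intro i
    have h1 : ((i.castSucc : ℕ)) + 1 < k + 1 := by
      have := i.isLt
      simp only [Fin.coe_castSucc]
      omega
    rw [show rot (k + 1) t i.castSucc = t ⟨(i.castSucc : ℕ) + 1, h1⟩ from dif_pos h1]
    congr 1
  simp_rw [hcs]
  have hsucc := Fin.sum_univ_succ t
  have : ∑ i : Fin k, t i.succ = (∑ i, t i) - t 0 := by rw [hsucc]; ring
  rw [this]; ring

lemma rot_mem_S {k : ℕ} (t : Fin (k + 1) → ℝ) : rot (k + 1) t ∈ S (k + 1) ↔ t ∈ S (k + 1) := by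
  constructor
  · rintro ⟨h1, h2⟩
    rw [rot_sum t] at h2
    refine ⟨fun j => ?_, ?_⟩
    · by_cases hj0 : j = 0
      · subst hj0; linarith
      · have hjv : 1 ≤ (j : ℕ) := Nat.one_le_iff_ne_zero.2 (fun hc => hj0 (Fin.ext hc))
        have hjlt := j.isLt
        have hlt : ((⟨(j : ℕ) - 1, by omega⟩ : Fin (k + 1)) : ℕ) + 1 < k + 1 := by
          simp only []
          omega
        have hh := h1 ⟨(j : ℕ) - 1, by omega⟩
        rw [show rot (k + 1) t ⟨(j : ℕ) - 1, by omega⟩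
            = t ⟨((⟨(j : ℕ) - 1, by omega⟩ : Fin (k + 1)) : ℕ) + 1, hlt⟩ from dif_pos hlt] at hh
        convert hh using 2
        exact Fin.ext (by simp; omega)
    · have hh := h1 (Fin.last k)
      have hlast : ¬((Fin.last k : ℕ) + 1 < k + 1) := by simp
      rw [show rot (k + 1) t (Fin.last k) = 1 - ∑ i, t i from dif_neg hlast] at hh
      linarith
  · rintro ⟨h1, h2⟩
    refine ⟨fun j => ?_, ?_⟩
    · by_cases hjl : (j : ℕ) + 1 < k + 1
      · rw [show rot (k + 1) t j = t ⟨(j : ℕ) + 1, hjl⟩ from dif_pos hjl]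
        exact h1 _
      · rw [show rot (k + 1) t j = 1 - ∑ i, t i from dif_neg hjl]
        linarith
    · rw [rot_sum t]
      linarith [h1 0]

lemma integral_comp_rot (m : ℕ) (G : (Fin m → ℝ) → ℂ) :
    (∫ t in S m, G (rot m t)) = ∫ s in S m, G s := by
  cases m with
  | zero =>
    refine setIntegral_congr_fun (measurableSet_S 0) (fun t _ => ?_)
    congr 1
    exact Subsingleton.elim _ _
  | succ k =>
    classical
    set σ : Fin (k + 1) ≃ Fin (k + 1) := finRotate (k + 1) with hσ
    set Pe := MeasurableEquiv.piCongrLeft (fun _ : Fin (k + 1) => ℝ) σ.symm with hPedef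
    have hPapp : ∀ (x : Fin (k + 1) → ℝ) (j : Fin (k + 1)), Pe x j = x (σ j) := by
      intro x j
      have h := Equiv.piCongrLeft_apply_apply (P := fun _ : Fin (k + 1) => ℝ) (e := σ.symm) x (σ j)
      simpa [hPedef, MeasurableEquiv.piCongrLeft] using h
    have hPmp : MeasurePreserving Pe volume volume :=
      volume_measurePreserving_piCongrLeft (fun _ => ℝ) σ.symm
    set Mfun : (Fin (k + 1) → ℝ) → (Fin (k + 1) → ℝ) :=
      fun x => Function.update x (Fin.last k) (-∑ i, x i) with hMdef
    have hMapp_last : ∀ x, Mfun x (Fin.last k) = -∑ i, x i := fun x => Function.update_self _ _ _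
    have hMapp_ne : ∀ x j, j ≠ Fin.last k → Mfun x j = x j :=
      fun x j hj => Function.update_of_ne hj _ _
    have hMsum : ∀ x, ∑ i, Mfun x i = -x (Fin.last k) := by
      intro x
      rw [hMdef]
      simp only
      rw [Finset.sum_update_of_mem (Finset.mem_univ _)]
      have h1 : ∑ i ∈ Finset.univ \ {Fin.last k}, x i = (∑ i, x i) - x (Fin.last k) := by
        rw [Finset.sum_sdiff_eq_sub (Finset.subset_univ _), Finset.sum_singleton]
      rw [h1]; ring
    have hMinv : Function.Involutive Mfun := by
      intro x
      funext j
      by_cases hj : j = Fin.last k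
      · subst hj
        rw [hMapp_last, hMsum, neg_neg]
      · rw [hMapp_ne _ _ hj, hMapp_ne _ _ hj]
    set Mlin : (Fin (k + 1) → ℝ) →ₗ[ℝ] (Fin (k + 1) → ℝ) :=
      { toFun := Mfun
        map_add' := by
          intro x y
          funext j
          by_cases hj : j = Fin.last k
          · subst hj
            simp only [Pi.add_apply, hMapp_last, Finset.sum_add_distrib]
            ring
          · simp only [Pi.add_apply, hMapp_ne (x + y) j hj, hMapp_ne x j hj, hMapp_ne y j hj,
              Pi.add_apply]
        map_smul' := by
          intro r x
          funext j
          by_cases hj : j = Fin.last k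
          · subst hj
            simp only [Pi.smul_apply, hMapp_last, smul_eq_mul, RingHom.id_apply]
            rw [mul_neg, Finset.mul_sum]
          · simp only [Pi.smul_apply, hMapp_ne (r • x) j hj, hMapp_ne x j hj, smul_eq_mul,
              RingHom.id_apply, Pi.smul_apply] } with hMlindef
    have hMcont : Continuous Mfun := by
      refine continuous_pi fun j => ?_
      by_cases hj : j = Fin.last k
      · have hfe : (fun x : Fin (k + 1) → ℝ => Mfun x j) = fun x => -∑ i, x i :=
          funext fun x => by rw [hj, hMapp_last]
        rw [hfe]
        exact (contSum (k + 1)).neg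
      · have hfe : (fun x : Fin (k + 1) → ℝ => Mfun x j) = fun x => x j :=
          funext fun x => by rw [hMapp_ne _ _ hj]
        rw [hfe]
        exact continuous_apply j
    have hdet : |LinearMap.det Mlin| = 1 := by
      have h2 : LinearMap.det Mlin * LinearMap.det Mlin = 1 := by
        rw [← LinearMap.det_comp,
          show Mlin.comp Mlin = LinearMap.id from LinearMap.ext fun x => hMinv x,
          LinearMap.det_id]
      rcases mul_self_eq_one_iff.1 h2 with h | h <;> rw [h] <;> norm_num
    have hMmp : MeasurePreserving Mfun volume volume := by
      have hdet0 : LinearMap.det Mlin ≠ 0 := by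
        intro h0
        rw [h0] at hdet
        norm_num at hdet
      refine ⟨hMcont.measurable, ?_⟩
      have hmap := Real.map_linearMap_volume_pi_eq_smul_volume_pi hdet0
      rw [show ⇑Mlin = Mfun from rfl] at hmap
      rw [hmap, abs_inv, hdet]
      norm_num
    set ctr : Fin (k + 1) → ℝ := fun j => if j = Fin.last k then 1 else 0 with hctrdef
    have hTmp : MeasurePreserving (fun x : Fin (k + 1) → ℝ => x + ctr) volume volume :=
      measurePreserving_add_right volume ctr
    have hσapp : ∀ j : Fin (k + 1), σ j = j + 1 := fun j => finRotate_succ_apply j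
    have hΦeq : rot (k + 1) = (fun x => x + ctr) ∘ Mfun ∘ ⇑Pe := by
      funext t j
      simp only [Function.comp_apply, Pi.add_apply]
      by_cases hj : j = Fin.last k
      · subst hj
        have hnl : ¬((Fin.last k : ℕ) + 1 < k + 1) := by simp
        rw [show rot (k + 1) t (Fin.last k) = 1 - ∑ i, t i from dif_neg hnl]
        have hsum : ∑ i, Pe t i = ∑ i, t i := by
          have h5 : ∀ i, Pe t i = t (σ i) := hPapp t
          simp_rw [h5]
          exact Equiv.sum_comp σ t
        rw [hMapp_last, hctrdef]
        simp only [if_pos rfl, if_true, eq_self_iff_true, hsum]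
        ring
      · have hjk : (j : ℕ) < k := Fin.val_lt_last hj
        have h1 : (j : ℕ) + 1 < k + 1 := by omega
        rw [show rot (k + 1) t j = t ⟨(j : ℕ) + 1, h1⟩ from dif_pos h1]
        rw [hMapp_ne _ _ hj, hctrdef]
        simp only [if_neg hj, add_zero]
        rw [hPapp, hσapp]
        congr 1
        refine Fin.ext ?_
        rw [Fin.val_add_one_of_lt]
        exact Fin.lt_def.2 (by simpa using hjk)
    have hΦmp : MeasurePreserving (rot (k + 1)) volume volume := by
      rw [hΦeq]
      exact hTmp.comp (hMmp.comp hPmp)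
    have hΦemb : MeasurableEmbedding (rot (k + 1)) := by
      rw [hΦeq]
      have e1 : MeasurableEmbedding ⇑Pe := Pe.measurableEmbedding
      have e2 : MeasurableEmbedding Mfun := by
        have : MeasurableEmbedding
            (⇑(⟨⟨Mfun, Mfun, fun x => hMinv x, fun x => hMinv x⟩,
              hMcont.measurable, hMcont.measurable⟩ : (Fin (k + 1) → ℝ) ≃ᵐ (Fin (k + 1) → ℝ))) :=
          MeasurableEquiv.measurableEmbedding _
        exact this
      have e3 : MeasurableEmbedding (fun x : Fin (k + 1) → ℝ => x + ctr) :=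
        (MeasurableEquiv.addRight ctr).measurableEmbedding
      exact e3.comp (e2.comp e1)
    have hΦS : rot (k + 1) ⁻¹' S (k + 1) = S (k + 1) := by
      ext t
      simp only [Set.mem_preimage]
      exact rot_mem_S t
    have hint := hΦmp.setIntegral_preimage_emb hΦemb G (S (k + 1))
    rw [hΦS] at hint
    exact hint

end Rot

section Final

lemma weighted_eq (m : ℕ) (f : ℝ → ℂ) (l : ℕ → ℝ) :
    (∫ s in S m, (1 - ∑ i, s i) •
        iteratedDeriv (m + 1) f (l 0 * (1 - ∑ i, s i) + ∑ j : Fin m, l ((j : ℕ) + 1) * s j))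
      = ∫ s in S m,
          (if h : ((0 : Fin (m + 1)) : ℕ) < m then s ⟨(0 : ℕ), h⟩ else 1 - ∑ i, s i)
            • iteratedDeriv (m + 1) f (∑ j : Fin (m + 1),
                l (j : ℕ) * (if h : (j : ℕ) < m then s ⟨(j : ℕ), h⟩ else 1 - ∑ i, s i)) := by
  cases m with
  | zero =>
    refine setIntegral_congr_fun (measurableSet_S 0) (fun s _ => ?_)
    norm_num
  | succ k =>
    rw [← integral_comp_rot (k + 1) (fun s => (1 - ∑ i, s i) •
      iteratedDeriv (k + 1 + 1) f (l 0 * (1 - ∑ i, s i) + ∑ j : Fin (k + 1), l ((j : ℕ) + 1) * s j))]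
    refine setIntegral_congr_fun (measurableSet_S (k + 1)) (fun t _ => ?_)
    have h1 : (1 : ℝ) - ∑ i, rot (k + 1) t i = t 0 := by rw [rot_sum]; ring
    have hL : ∑ j : Fin (k + 1), l ((j : ℕ) + 1) * rot (k + 1) t j
        = (∑ i : Fin k, l ((i : ℕ) + 1) * t i.succ) + l (k + 1) * (1 - ∑ i, t i) := by
      rw [Fin.sum_univ_castSucc]
      simp only [rot_castSucc, rot_last, Fin.coe_castSucc, Fin.val_last]
    have hR : ∑ j : Fin (k + 1 + 1),
          l (j : ℕ) * (if h : (j : ℕ) < k + 1 then t ⟨(j : ℕ), h⟩ else 1 - ∑ i, t i)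
        = (l 0 * t 0 + ∑ i : Fin k, l ((i : ℕ) + 1) * t i.succ) + l (k + 1) * (1 - ∑ i, t i) := by
      rw [Fin.sum_univ_castSucc]
      have hlastd : ¬((Fin.last (k + 1) : ℕ) < k + 1) := by simp
      have hmain : ∑ i : Fin (k + 1),
            l ((i.castSucc : ℕ)) * (if h : ((i.castSucc : ℕ)) < k + 1
              then t ⟨((i.castSucc : ℕ)), h⟩ else 1 - ∑ i, t i)
          = l 0 * t 0 + ∑ i : Fin k, l ((i : ℕ) + 1) * t i.succ := by
        have hterm : ∀ i : Fin (k + 1),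
            l ((i.castSucc : ℕ)) * (if h : ((i.castSucc : ℕ)) < k + 1
              then t ⟨((i.castSucc : ℕ)), h⟩ else 1 - ∑ i, t i) = l (i : ℕ) * t i := by
          intro i
          have hlt : ((i.castSucc : ℕ)) < k + 1 := by
            simp only [Fin.coe_castSucc]
            exact i.isLt
          rw [dif_pos hlt]
          simp only [Fin.coe_castSucc]
        rw [Finset.sum_congr rfl (fun i _ => hterm i), Fin.sum_univ_succ]
        simp only [Fin.val_zero, Fin.val_succ]
      rw [hmain]
      rw [show ((Fin.last (k + 1) : ℕ)) = k + 1 from Fin.val_last _]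
      rw [dif_neg (by omega : ¬(k + 1 < k + 1))]
    have h2 : l 0 * (1 - ∑ i, rot (k + 1) t i)
          + ∑ j : Fin (k + 1), l ((j : ℕ) + 1) * rot (k + 1) t j
        = ∑ j : Fin (k + 1 + 1),
            l (j : ℕ) * (if h : (j : ℕ) < k + 1 then t ⟨(j : ℕ), h⟩ else 1 - ∑ i, t i) := by
      rw [h1, hL, hR]
      ring
    have h0w : (if h : ((0 : Fin (k + 1 + 1)) : ℕ) < k + 1 then t ⟨(0 : ℕ), h⟩
        else 1 - ∑ i, t i) = t 0 := by
      norm_num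
    rw [h2, h1, h0w]

end Final

end DivDiffHG

open DivDiffHG

/-- For `f ∈ Cⁿ` (with `n = m + 1 ≥ 1`), the function
`φ(λ₀,…,λ_{n−1}) = f^{[n]}(λ₀, λ₀, λ₁, …, λ_{n−1})` has the integral representation
`φ(λ₀,…,λ_{n−1}) = ∫_{S^{n−1}} s₀ f^{(n)}(∑_{j<n} λⱼ sⱼ) dσ_{n−1}`, where the simplex
measure is realized over `R^{n−1}` with last barycentric coordinate `1 − ∑ sⱼ`. -/
theorem divDiff_repeated_first_arg_integral (m : ℕ) (f : ℝ → ℂ)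
    (hf : ContDiff ℝ (m + 1) f) (l : ℕ → ℝ) :
    divDiff f (m + 1) (fun j => if j = 0 then l 0 else l (j - 1))
      = ∫ s in {s : Fin m → ℝ | (∀ j, 0 ≤ s j) ∧ ∑ j, s j ≤ 1},
          ((fun j : Fin (m + 1) =>
              if h : (j : ℕ) < m then s ⟨j, h⟩ else 1 - ∑ i, s i) 0)
            • iteratedDeriv (m + 1) f (∑ j : Fin (m + 1),
                l (j : ℕ) * (if h : (j : ℕ) < m then s ⟨j, h⟩ else 1 - ∑ i, s i)) := by
  classical
  have hf' : ContDiff ℝ ((m : ℕ) + 1) f := by exact_mod_cast hf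
  set lam : ℕ → ℝ := fun j => if j = 0 then l 0 else l (j - 1) with hlam
  have hlam0 : lam 0 = l 0 := by simp [hlam]
  have hlam1 : lam 1 = l 0 := by simp [hlam]
  have hδ : divDiff f (m + 1) lam
      = deriv (fun x => divDiff f m (fun j => if j = 0 then x else lam (j + 1))) (lam 1) := by
    rw [divDiff, if_pos (hlam0.trans hlam1.symm)]
  have hlam2 : ∀ x : ℝ,
      (fun j => if j = 0 then x else lam (j + 1)) = fun j => if j = 0 then x else l j := by
    intro x
    funext j
    by_cases hj : j = 0
    · simp [hj]
    · simp [hj, hlam]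
  have hfm : ContDiff ℝ (m : ℕ) f := contDiff_nat_le hf' (Nat.le_succ m)
  have hcomb : (fun x => divDiff f m (fun j => if j = 0 then x else lam (j + 1)))
      = fun x => ∫ s in S m, iteratedDeriv m f
          (x * (1 - ∑ i, s i) + ∑ j : Fin m, l ((j : ℕ) + 1) * s j) := by
    funext x
    rw [hlam2 x, divDiff_eq_K f m hfm, K_first_node]
  have hpd : ∀ y, HasDerivAt (iteratedDeriv m f) (iteratedDeriv (m + 1) f y) y := by
    intro y
    have hdiff : Differentiable ℝ (iteratedDeriv m f) :=
      hf'.differentiable_iteratedDeriv m (by exact_mod_cast Nat.lt_succ_self m)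
    have h1 := (hdiff y).hasDerivAt
    rwa [show deriv (iteratedDeriv m f) y = iteratedDeriv (m + 1) f y from by
      rw [iteratedDeriv_succ]] at h1
  have hD := hasDerivAt_param (n := m)
      (g := iteratedDeriv m f) (g' := iteratedDeriv (m + 1) f)
      (a := fun s => 1 - ∑ i, s i) (c := fun s => ∑ j : Fin m, l ((j : ℕ) + 1) * s j)
      (hf'.continuous_iteratedDeriv (m + 1) (by exact_mod_cast le_rfl))
      hpd
      (continuous_const.sub (contSum m))
      (continuous_finset_sum _ fun j _ => continuous_const.mul (continuous_apply j)) (l 0)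
  rw [hδ, hlam1, hcomb, hD.deriv]
  exact weighted_eq m f l
end
end
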